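/- Let (ũ_k)_{k≥0} be the Lehmer sequence associated to ζ and η, let n be a positive integer, δ ∈ [0,1], and let A be a random set in B(n, δ). Then for all positive integers m and ℓ with gcd(mℓ, c₂) = 1, E(I_A(m)·I_A(ℓ)) = 1 − (1 − δ)^{⌊n/ρ(m)⌋} − (1 − δ)^{⌊n/ρ(ℓ)⌋} + (1 − δ)^{⌊n/ρ(m)⌋ + ⌊n/ρ(ℓ)⌋ − ⌊n/lcm(ρ(m),ρ(ℓ))⌋}, where I_A(m) := 1 if ρ(m) divides some a ∈ A and I_A(m) := 0 otherwise. -/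

import Mathlib

open Finset in
private lemma binom_sum (s : Finset ℕ) (δ : ℝ) :
    ∑ A ∈ s.powerset, δ ^ A.card * (1 - δ) ^ (s.card - A.card) = 1 := by
  have h := Finset.prod_add (fun _ : ℕ => δ) (fun _ : ℕ => 1 - δ) s
  simp only [add_sub_cancel, prod_const_one, prod_const, one_pow] at h
  have h2 : ∑ A ∈ s.powerset, δ ^ A.card * (1 - δ) ^ (s.card - A.card)
      = ∑ A ∈ s.powerset, δ ^ A.card * (1 - δ) ^ (s \ A).card := by
    apply Finset.sum_congr rfl
    intro t ht
    rw [Finset.mem_powerset] at ht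
    rw [card_sdiff_of_subset ht]
  rw [h2]; exact h.symm

open Finset in
private lemma miss_sum (n : ℕ) (δ : ℝ) (S : Finset ℕ) (hS : S ⊆ Finset.Icc 1 n) :
    ∑ A ∈ (Finset.Icc 1 n).powerset, δ ^ A.card * (1 - δ) ^ (n - A.card) *
      (if A ∩ S = ∅ then (1 : ℝ) else 0) = (1 - δ) ^ S.card := by
  classical
  have hIcc : (Finset.Icc 1 n).card = n := by simp
  simp only [mul_ite, mul_one, mul_zero]
  rw [Finset.sum_ite, Finset.sum_const, smul_zero, add_zero]
  have hfilter : (Finset.Icc 1 n).powerset.filter (fun A => A ∩ S = ∅)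
      = (Finset.Icc 1 n \ S).powerset := by
    ext A
    simp only [mem_filter, mem_powerset, subset_sdiff, ← disjoint_iff_inter_eq_empty]
  rw [hfilter]
  have hScard : S.card ≤ n := hIcc ▸ Finset.card_le_card hS
  have hsd : (Finset.Icc 1 n \ S).card = n - S.card := by
    rw [card_sdiff_of_subset hS, hIcc]
  have : ∀ A ∈ (Finset.Icc 1 n \ S).powerset,
      δ ^ A.card * (1 - δ) ^ (n - A.card)
        = (1 - δ) ^ S.card * (δ ^ A.card * (1 - δ) ^ ((Finset.Icc 1 n \ S).card - A.card)) := by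
    intro A hA
    rw [mem_powerset] at hA
    have hAcard : A.card ≤ n - S.card := hsd ▸ Finset.card_le_card hA
    have : n - A.card = S.card + ((Finset.Icc 1 n \ S).card - A.card) := by
      rw [hsd]; omega
    rw [this, pow_add]; ring
  rw [Finset.sum_congr rfl this, ← Finset.mul_sum, binom_sum, mul_one]

open scoped Classical in
theorem stmt_15
    (ζ η : ℂ) (c₁ c₂ : ℤ)
    (hc₁ : (c₁ : ℂ) = (ζ + η) ^ 2) (hc₂ : (c₂ : ℂ) = ζ * η)
    (hc₁0 : c₁ ≠ 0) (hc₂0 : c₂ ≠ 0) (hcop : IsCoprime c₁ c₂)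
    (habs : ‖η‖ ≤ ‖ζ‖)
    (hru : ∀ k : ℕ, 0 < k → (ζ / η) ^ k ≠ 1)
    (u : ℕ → ℤ)
    (hu : ∀ k : ℕ, (u k : ℂ) =
      if Odd k then (ζ ^ k - η ^ k) / (ζ - η) else (ζ ^ k - η ^ k) / (ζ ^ 2 - η ^ 2))
    (ρ : ℕ → ℕ)
    (hρ : ∀ m : ℕ, 0 < m → Int.gcd (m : ℤ) c₂ = 1 →
      0 < ρ m ∧ (m : ℤ) ∣ u (ρ m) ∧ ∀ k : ℕ, 0 < k → (m : ℤ) ∣ u k → ρ m ≤ k) :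
    ∀ n : ℕ, 0 < n → ∀ δ : ℝ, δ ∈ Set.Icc (0 : ℝ) 1 →
      ∀ m ℓ : ℕ, 0 < m → 0 < ℓ → Int.gcd ((m * ℓ : ℕ) : ℤ) c₂ = 1 →
        (∑ A ∈ (Finset.Icc 1 n).powerset,
            δ ^ A.card * (1 - δ) ^ (n - A.card) *
              ((if ∃ a ∈ A, ρ m ∣ a then (1 : ℝ) else 0) *
               (if ∃ a ∈ A, ρ ℓ ∣ a then (1 : ℝ) else 0))) =
          1 - (1 - δ) ^ (n / ρ m) - (1 - δ) ^ (n / ρ ℓ)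
            + (1 - δ) ^ (n / ρ m + n / ρ ℓ - n / Nat.lcm (ρ m) (ρ ℓ)) := by
  intro n hn δ hδ m ℓ hm hℓ hcml
  -- coprimality of m and ℓ with c₂
  have hcast : ((m * ℓ : ℕ) : ℤ) = (m : ℤ) * ℓ := by push_cast; ring
  have hcml' : IsCoprime ((m : ℤ) * ℓ) c₂ := by
    rw [Int.isCoprime_iff_gcd_eq_one, ← hcast]; exact hcml
  have hcm : Int.gcd (m : ℤ) c₂ = 1 :=
    Int.isCoprime_iff_gcd_eq_one.mp hcml'.of_mul_left_left
  have hcl : Int.gcd (ℓ : ℤ) c₂ = 1 :=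
    Int.isCoprime_iff_gcd_eq_one.mp hcml'.of_mul_left_right
  have hρm : 0 < ρ m := (hρ m hm hcm).1
  have hρℓ : 0 < ρ ℓ := (hρ ℓ hℓ hcl).1
  -- the relevant sets of multiples
  set Sm : Finset ℕ := (Finset.Icc 1 n).filter (fun a => ρ m ∣ a) with hSm
  set Sl : Finset ℕ := (Finset.Icc 1 n).filter (fun a => ρ ℓ ∣ a) with hSl
  have hIoc : Finset.Icc 1 n = Finset.Ioc 0 n := rfl
  have hcardSm : Sm.card = n / ρ m := by
    rw [hSm, hIoc]; exact Nat.Ioc_filter_dvd_card_eq_div n (ρ m)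
  have hcardSl : Sl.card = n / ρ ℓ := by
    rw [hSl, hIoc]; exact Nat.Ioc_filter_dvd_card_eq_div n (ρ ℓ)
  have hinter : Sm ∩ Sl = (Finset.Icc 1 n).filter (fun a => Nat.lcm (ρ m) (ρ ℓ) ∣ a) := by
    rw [hSm, hSl, ← Finset.filter_and]
    apply Finset.filter_congr
    intro a _
    simp [Nat.lcm_dvd_iff]
  have hcardI : (Sm ∩ Sl).card = n / Nat.lcm (ρ m) (ρ ℓ) := by
    rw [hinter, hIoc]; exact Nat.Ioc_filter_dvd_card_eq_div n _
  have hcardU : (Sm ∪ Sl).card = n / ρ m + n / ρ ℓ - n / Nat.lcm (ρ m) (ρ ℓ) := by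
    have := Finset.card_union_add_card_inter Sm Sl
    omega
  have hSmsub : Sm ⊆ Finset.Icc 1 n := Finset.filter_subset _ _
  have hSlsub : Sl ⊆ Finset.Icc 1 n := Finset.filter_subset _ _
  have hUsub : Sm ∪ Sl ⊆ Finset.Icc 1 n := Finset.union_subset hSmsub hSlsub
  -- pointwise identity
  have key : ∀ A ∈ (Finset.Icc 1 n).powerset,
      δ ^ A.card * (1 - δ) ^ (n - A.card) *
        ((if ∃ a ∈ A, ρ m ∣ a then (1 : ℝ) else 0) *
         (if ∃ a ∈ A, ρ ℓ ∣ a then (1 : ℝ) else 0))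
      = δ ^ A.card * (1 - δ) ^ (n - A.card) * (if A ∩ ∅ = ∅ then (1 : ℝ) else 0)
        - δ ^ A.card * (1 - δ) ^ (n - A.card) * (if A ∩ Sm = ∅ then (1 : ℝ) else 0)
        - δ ^ A.card * (1 - δ) ^ (n - A.card) * (if A ∩ Sl = ∅ then (1 : ℝ) else 0)
        + δ ^ A.card * (1 - δ) ^ (n - A.card) * (if A ∩ (Sm ∪ Sl) = ∅ then (1 : ℝ) else 0) := by
    intro A hA
    rw [Finset.mem_powerset] at hA
    have hex : ∀ r : ℕ, (∃ a ∈ A, r ∣ a) ↔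
        (A ∩ (Finset.Icc 1 n).filter (fun a => r ∣ a)).Nonempty := by
      intro r
      constructor
      · rintro ⟨a, haA, hr⟩
        exact ⟨a, Finset.mem_inter.mpr ⟨haA, Finset.mem_filter.mpr ⟨hA haA, hr⟩⟩⟩
      · rintro ⟨a, ha⟩
        rw [Finset.mem_inter, Finset.mem_filter] at ha
        exact ⟨a, ha.1, ha.2.2⟩
    have hU : A ∩ (Sm ∪ Sl) = ∅ ↔ (A ∩ Sm = ∅ ∧ A ∩ Sl = ∅) := by
      rw [Finset.inter_union_distrib_left, Finset.union_eq_empty]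
    rw [hSm, hSl] at *
    by_cases h1 : A ∩ (Finset.Icc 1 n).filter (fun a => ρ m ∣ a) = ∅ <;>
      by_cases h2 : A ∩ (Finset.Icc 1 n).filter (fun a => ρ ℓ ∣ a) = ∅ <;>
        simp [hex, Finset.nonempty_iff_ne_empty, h1, h2, hU] <;> ring
  rw [Finset.sum_congr rfl key]
  rw [Finset.sum_add_distrib, Finset.sum_sub_distrib, Finset.sum_sub_distrib]
  rw [miss_sum n δ ∅ (Finset.empty_subset _), miss_sum n δ Sm hSmsub,
    miss_sum n δ Sl hSlsub, miss_sum n δ (Sm ∪ Sl) hUsub]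
  rw [hcardSm, hcardSl, hcardU]
  simp
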